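/- Let f : X → X be a continuous self-map of a compact metric space with the shadowing property. Then the set 𝔸(f) = {x ∈ X : ω(x,f) is a periodic orbit or an odometer} is dense in X. -/

import Mathlib

open Filter Topology Metric Set

/-- A periodic structure: a sequence of positive integers with `m j ∣ m (j+1)` and `m j → ∞`. -/
structure PeriodicStructure where
  m : ℕ → ℕ
  pos : ∀ j, 0 < m j
  dvd : ∀ j, m j ∣ m (j + 1)
  tendsto : Filter.Tendsto m Filter.atTop Filter.atTop

/-- The odometer space `X_m` of a periodic structure. -/
def PeriodicStructure.space (p : PeriodicStructure) : Type :=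
  {x : ℕ → ℕ // ∀ j, x j < p.m j ∧ x (j + 1) % p.m j = x j}

instance (p : PeriodicStructure) : TopologicalSpace p.space :=
  inferInstanceAs (TopologicalSpace
    {x : ℕ → ℕ // ∀ j, x j < p.m j ∧ x (j + 1) % p.m j = x j})

/-- The odometer map `g_m` (adding 1 coordinatewise mod `m j`). -/
def PeriodicStructure.step (p : PeriodicStructure) (x : p.space) : p.space :=
  ⟨fun j => (x.1 j + 1) % p.m j, by
    intro j
    refine ⟨Nat.mod_lt _ (p.pos j), ?_⟩
    show (x.1 (j + 1) + 1) % p.m (j + 1) % p.m j = (x.1 j + 1) % p.m j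
    rw [Nat.mod_mod_of_dvd _ (p.dvd j), ← (x.2 j).2, Nat.add_mod]
    exact Nat.add_mod_mod _ _ _⟩

/-- `S` is an odometer for `f`: `f` restricted to `S` is topologically conjugate to
an odometer `g_m : X_m → X_m`. -/
def IsOdometer {X : Type*} [TopologicalSpace X] (f : X → X) (S : Set X) : Prop :=
  ∃ p : PeriodicStructure, ∃ h : p.space ≃ₜ S,
    ∀ z : p.space, f ((h z : X)) = ((h (p.step z) : X))

/-- `S` is a periodic orbit of `f`. -/
def IsPeriodicOrbit {X : Type*} (f : X → X) (S : Set X) : Prop :=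
  ∃ x ∈ S, ∃ i : ℕ, 0 < i ∧ f^[i] x = x ∧ S = {y | ∃ j < i, f^[j] x = y}

/-- The ω-limit set of a sequence of points. -/
def omegaLimitSeq {X : Type*} [TopologicalSpace X] (x : ℕ → X) : Set X :=
  {y | ∃ φ : ℕ → ℕ, StrictMono φ ∧
    Filter.Tendsto (fun j => x (φ j)) Filter.atTop (nhds y)}

/-- The ω-limit set `ω(x, f)` of a point. -/
def omegaLimitPt {X : Type*} [TopologicalSpace X] (f : X → X) (x : X) : Set X :=
  omegaLimitSeq fun i => f^[i] x

/-- `M` is a minimal set for `f`. -/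
def IsMinimalSet {X : Type*} [TopologicalSpace X] (f : X → X) (M : Set X) : Prop :=
  M.Nonempty ∧ IsClosed M ∧ Set.MapsTo f M M ∧
    ∀ S ⊆ M, IsClosed S → Set.MapsTo f S S → S = ∅ ∨ S = M

/-- `x` is a minimal point for `f`. -/
def IsMinimalPoint {X : Type*} [TopologicalSpace X] (f : X → X) (x : X) : Prop :=
  IsMinimalSet f (closure (Set.range fun i => f^[i] x))

/-- `x` is a regularly recurrent point for `f`. -/
def RegularlyRecurrent {X : Type*} [PseudoMetricSpace X] (f : X → X) (x : X) : Prop :=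
  ∀ ε > 0, ∃ n : ℕ, 0 < n ∧ ∀ k : ℕ, dist x (f^[k * n] x) ≤ ε

/-- `f` has the shadowing property. -/
def ShadowingProperty {X : Type*} [PseudoMetricSpace X] (f : X → X) : Prop :=
  ∀ ε > 0, ∃ δ > 0, ∀ ξ : ℕ → X,
    (∀ i, dist (f (ξ i)) (ξ (i + 1)) ≤ δ) → ∃ y, ∀ i, dist (f^[i] y) (ξ i) ≤ ε

open Filter Topology Metric Set


open Filter Topology Metric Set

section A
variable {X : Type*} [MetricSpace X]

lemma mem_omega_of_freq {x : ℕ → X} {p : X}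
    (h : ∀ N : ℕ, ∀ δ : ℝ, 0 < δ → ∃ i, N ≤ i ∧ dist (x i) p < δ) :
    p ∈ omegaLimitSeq x := by
  have h' : ∀ j N : ℕ, ∃ i, N ≤ i ∧ dist (x i) p < 1 / (j + 1) := by
    intro j N
    exact h N (1 / (j + 1)) (by positivity)
  choose g hg1 hg2 using h'
  let φ : ℕ → ℕ := fun j => Nat.rec (g 0 0) (fun j ih => g (j + 1) (ih + 1)) j
  have hstep : ∀ j, φ (j + 1) = g (j + 1) (φ j + 1) := fun j => rfl
  have hmono : StrictMono φ := by
    apply strictMono_nat_of_lt_succ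
    intro j
    rw [hstep]
    have := hg1 (j + 1) (φ j + 1)
    omega
  refine ⟨φ, hmono, ?_⟩
  rw [tendsto_iff_dist_tendsto_zero]
  apply squeeze_zero (fun j => dist_nonneg) (g := fun j : ℕ => 1 / ((j : ℝ) + 1))
  · intro j
    have : dist (x (φ j)) p < 1 / ((j : ℝ) + 1) := by
      cases j with
      | zero => exact hg2 0 0
      | succ j => rw [hstep]; exact hg2 (j + 1) (φ j + 1)
    exact this.le
  · exact tendsto_one_div_add_atTop_nhds_zero_nat

lemma omegaLimitSeq_isClosed (x : ℕ → X) : IsClosed (omegaLimitSeq x) := by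
  rw [← closure_subset_iff_isClosed]
  intro p hp
  apply mem_omega_of_freq
  intro N δ hδ
  rw [Metric.mem_closure_iff] at hp
  obtain ⟨q, hq, hpq⟩ := hp (δ / 2) (by linarith)
  obtain ⟨φ, hφ, htend⟩ := hq
  rw [Metric.tendsto_atTop] at htend
  obtain ⟨J, hJ⟩ := htend (δ / 2) (by linarith)
  refine ⟨φ (max J N), le_trans (le_max_right J N) (hφ.le_apply), ?_⟩
  calc dist (x (φ (max J N))) p ≤ dist (x (φ (max J N))) q + dist q p := dist_triangle _ _ _
    _ < δ / 2 + δ / 2 := by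
        have := hJ (max J N) (le_max_left J N)
        rw [dist_comm] at hpq
        linarith
    _ = δ := by ring

lemma omegaLimitSeq_congr {x x' : ℕ → X}
    (h : Tendsto (fun i => dist (x i) (x' i)) atTop (𝓝 0)) :
    omegaLimitSeq x = omegaLimitSeq x' := by
  have key : ∀ (u u' : ℕ → X), Tendsto (fun i => dist (u i) (u' i)) atTop (𝓝 0) →
      omegaLimitSeq u ⊆ omegaLimitSeq u' := by
    intro u u' hd p ⟨φ, hφ, htend⟩
    refine ⟨φ, hφ, ?_⟩
    rw [tendsto_iff_dist_tendsto_zero]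
    apply squeeze_zero (fun j => dist_nonneg)
      (g := fun j => dist (u' (φ j)) (u (φ j)) + dist (u (φ j)) p)
    · intro j; exact dist_triangle _ _ _
    · have h1 : Tendsto (fun j => dist (u' (φ j)) (u (φ j))) atTop (𝓝 0) := by
        have := hd.comp hφ.tendsto_atTop
        simpa [Function.comp_def, dist_comm] using this
      have h2 : Tendsto (fun j => dist (u (φ j)) p) atTop (𝓝 0) :=
        tendsto_iff_dist_tendsto_zero.mp htend
      simpa using h1.add h2
  apply subset_antisymm
  · exact key x x' h
  · exact key x' x (by simpa [dist_comm] using h)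

variable {f : X → X}

lemma omega_inv (hf : Continuous f) {z p : X} (hp : p ∈ omegaLimitPt f z) :
    f p ∈ omegaLimitPt f z := by
  obtain ⟨φ, hφ, htend⟩ := hp
  refine ⟨fun j => φ j + 1, fun a b hab => Nat.succ_lt_succ (hφ hab), ?_⟩
  have : Tendsto (fun j => f (f^[φ j] z)) atTop (𝓝 (f p)) :=
    (hf.continuousAt.tendsto).comp htend
  simpa [Function.iterate_succ_apply'] using this

lemma iterate_mem_omega (hf : Continuous f) {z : X} (hz : z ∈ omegaLimitPt f z) (c : ℕ) :
    f^[c] z ∈ omegaLimitPt f z := by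
  induction c with
  | zero => exact hz
  | succ c ih => rw [Function.iterate_succ_apply']; exact omega_inv hf ih

lemma omega_eq_closure_orbit (hf : Continuous f) {z : X} (hz : z ∈ omegaLimitPt f z) :
    omegaLimitPt f z = closure (Set.range fun c => f^[c] z) := by
  apply subset_antisymm
  · intro p ⟨φ, hφ, htend⟩
    exact mem_closure_of_tendsto htend (Eventually.of_forall fun j => ⟨φ j, rfl⟩)
  · apply closure_minimal
    · rintro p ⟨c, rfl⟩
      exact iterate_mem_omega hf hz c
    · exact omegaLimitSeq_isClosed _

end A

section B
variable {X : Type*} [MetricSpace X]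

lemma sum_Ico_two_pow (k M : ℕ) : ∑ i ∈ Finset.Ico k M, ((1:ℝ)/2)^i ≤ 2 * (1/2)^k := by
  rw [Finset.sum_Ico_eq_sum_range]
  calc ∑ j ∈ Finset.range (M-k), ((1:ℝ)/2)^(k+j)
      = (1/2)^k * ∑ j ∈ Finset.range (M-k), ((1:ℝ)/2)^j := by
        rw [Finset.mul_sum]; exact Finset.sum_congr rfl fun j _ => pow_add _ _ _
    _ ≤ (1/2)^k * 2 := by
        have h2 := sum_geometric_two_le (M - k)
        have : (0:ℝ) ≤ (1/2)^k := by positivity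
        nlinarith
    _ = 2 * (1/2)^k := by ring

lemma tail_est {w : ℕ → X} {p : X} (hw : Tendsto w atTop (𝓝 p)) {B : ℝ} (hB : 0 ≤ B) (k : ℕ)
    (h : ∀ m, k ≤ m → dist (w m) (w (m+1)) ≤ B * (1/2)^m) :
    dist (w k) p ≤ 2 * B * (1/2)^k := by
  apply le_of_tendsto (tendsto_const_nhds.dist hw)
  filter_upwards [eventually_ge_atTop k] with M hM
  calc dist (w k) (w M) ≤ ∑ i ∈ Finset.Ico k M, dist (w i) (w (i+1)) :=
        dist_le_Ico_sum_dist w hM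
    _ ≤ ∑ i ∈ Finset.Ico k M, B * (1/2)^i :=
        Finset.sum_le_sum (fun i hi => h i (Finset.mem_Ico.mp hi).1)
    _ = B * ∑ i ∈ Finset.Ico k M, ((1:ℝ)/2)^i := by rw [Finset.mul_sum]
    _ ≤ B * (2 * (1/2)^k) := by
        have := sum_Ico_two_pow k M
        nlinarith
    _ = 2 * B * (1/2)^k := by ring

lemma exists_return [CompactSpace X] (u : ℕ → X) {δ : ℝ} (hδ : 0 < δ) (A L : ℕ) :
    ∃ j j', A ≤ j ∧ j + L ≤ j' ∧ dist (u j') (u j) ≤ δ := by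
  have htb : TotallyBounded (univ : Set X) := isCompact_univ.totallyBounded
  rw [Metric.totallyBounded_iff] at htb
  obtain ⟨t, htfin, hcov⟩ := htb (δ/2) (by linarith)
  have hL : 0 < L + 1 := Nat.succ_pos L
  have hmem : ∀ s : ℕ, ∃ c ∈ t, u (A + (L+1) * s) ∈ ball c (δ/2) := by
    intro s
    have := hcov (mem_univ (u (A + (L+1) * s)))
    simpa using this
  choose c hc1 hc2 using hmem
  haveI : Finite ↥t := htfin.to_subtype
  obtain ⟨s, s', hne, heq⟩ := Finite.exists_ne_map_eq_of_infinite
    (fun s : ℕ => (⟨c s, hc1 s⟩ : ↥t))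
  rcases Nat.lt_or_ge s s' with hlt | hge
  case _ =>
    refine ⟨A + (L+1) * s, A + (L+1) * s', Nat.le_add_right _ _, ?_, ?_⟩
    · have : (L+1) * s + (L + 1) ≤ (L+1) * s' := by
        have : s + 1 ≤ s' := hlt
        calc (L+1) * s + (L+1) = (L+1) * (s+1) := by ring
          _ ≤ (L+1) * s' := Nat.mul_le_mul_left _ this
      omega
    · have h1 := hc2 s; have h2 := hc2 s'
      have hcc : c s = c s' := congrArg Subtype.val heq
      rw [mem_ball] at h1 h2
      rw [hcc] at h1
      calc dist (u (A + (L+1)*s')) (u (A + (L+1)*s))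
          ≤ dist (u (A + (L+1)*s')) (c s') + dist (c s') (u (A + (L+1)*s)) := dist_triangle _ _ _
        _ ≤ δ/2 + δ/2 := by
            rw [dist_comm (c s')]
            exact add_le_add h2.le h1.le
        _ = δ := by ring
  case _ =>
    have hlt : s' < s := lt_of_le_of_ne hge (Ne.symm hne)
    refine ⟨A + (L+1) * s', A + (L+1) * s, Nat.le_add_right _ _, ?_, ?_⟩
    · have : (L+1) * s' + (L + 1) ≤ (L+1) * s := by
        have : s' + 1 ≤ s := hlt
        calc (L+1) * s' + (L+1) = (L+1) * (s'+1) := by ring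
          _ ≤ (L+1) * s := Nat.mul_le_mul_left _ this
      omega
    · have h1 := hc2 s; have h2 := hc2 s'
      have hcc : c s = c s' := congrArg Subtype.val heq
      rw [mem_ball] at h1 h2
      rw [hcc] at h1
      calc dist (u (A + (L+1)*s)) (u (A + (L+1)*s'))
          ≤ dist (u (A + (L+1)*s)) (c s') + dist (c s') (u (A + (L+1)*s')) := dist_triangle _ _ _
        _ ≤ δ/2 + δ/2 := by
            rw [dist_comm (c s')]
            exact add_le_add h1.le h2.le
        _ = δ := by ring

variable {f : X → X}

lemma step_exists [CompactSpace X] (hsh : ShadowingProperty f) {ε' : ℝ} (hε' : 0 < ε')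
    (Y : X) (A N : ℕ) (k : ℕ) :
    ∃ (Y' : X) (A' N' : ℕ),
      A + (k+1) * N ≤ A' ∧ (∃ j, A' = A + j * N) ∧
      (∃ m, 2 ≤ m ∧ N' = m * N) ∧
      (∀ i, dist (f^[i] Y') (f^[if i < A' then i else A' + (i - A') % N'] Y) ≤ ε') := by
  obtain ⟨δ, hδ, hshad⟩ := hsh ε' hε'
  obtain ⟨j, j', hj, hjj', hret⟩ := exists_return (fun t => f^[A + t * N] Y) hδ (k+1) 2
  set A' := A + j * N with hA'def
  set N' := (j' - j) * N with hN'def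
  have hAN' : A' + N' = A + j' * N := by
    have h1 : j * N + (j' - j) * N = j' * N := by
      rw [← Nat.add_mul]; congr 1; omega
    omega
  have hstep : A + (k+1) * N ≤ A' := by
    have := Nat.mul_le_mul_right N hj
    omega
  have hit : ∀ m : ℕ, f (f^[m] Y) = f^[m+1] Y := fun m => (Function.iterate_succ_apply' f m Y).symm
  set ρ : ℕ → ℕ := fun i => if i < A' then i else A' + (i - A') % N' with hρ
  have hpseudo : ∀ i, dist (f (f^[ρ i] Y)) (f^[ρ (i+1)] Y) ≤ δ := by
    intro i
    rcases Nat.lt_or_ge (i+1) A' with h1 | h1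
    · have h0 : i < A' := by omega
      have : ρ i = i := if_pos h0
      have h2 : ρ (i+1) = i+1 := if_pos h1
      rw [this, h2, hit i]
      simp [hδ.le]
    · rcases Nat.lt_or_ge i A' with h2 | h2
      · -- i + 1 = A'
        have heq : i + 1 = A' := by omega
        have h3 : ρ i = i := if_pos h2
        have h4 : ρ (i+1) = i+1 := by
          simp only [hρ, if_neg (by omega : ¬ i+1 < A')]
          have hz : i + 1 - A' = 0 := by omega
          rw [hz, Nat.zero_mod]
          omega
        rw [h3, h4, hit i]
        simp [hδ.le]
      · -- i ≥ A'
        have hN : 0 < N' ∨ N = 0 := by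
          rcases Nat.eq_zero_or_pos N with h | h
          · right; exact h
          · left; exact Nat.mul_pos (by omega) h
        rcases hN with hN | hN
        swap
        · -- degenerate N = 0 : then N' = 0, everything mod 0; handle
          have hNz : N' = 0 := by simp [hN'def, hN]
          have h3 : ρ i = i := by
            simp only [hρ, if_neg (by omega : ¬ i < A'), hNz, Nat.mod_zero]
            omega
          have h4 : ρ (i+1) = i+1 := by
            simp only [hρ, if_neg (by omega : ¬ i+1 < A'), hNz, Nat.mod_zero]
            omega
          rw [h3, h4, hit i]
          simp [hδ.le]
        have h3 : ρ i = A' + (i - A') % N' := if_neg (by omega)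
        set r := (i - A') % N' with hr
        have hrlt : r < N' := Nat.mod_lt _ hN
        have hsub : i + 1 - A' = (i - A') + 1 := by omega
        rcases Nat.lt_or_ge (r+1) N' with h4 | h4
        · have hme : (i - A' + 1) % N' = (r + 1) % N' :=
            Nat.ModEq.add_right 1 (hr ▸ (Nat.mod_modEq (i - A') N').symm)
          have h5 : ρ (i+1) = A' + (r + 1) := by
            simp only [hρ, if_neg (by omega : ¬ i+1 < A'), hsub]
            rw [hme, Nat.mod_eq_of_lt h4]
          rw [h3, h5, hit (A' + r)]
          have : A' + r + 1 = A' + (r+1) := by omega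
          rw [this]
          simp [hδ.le]
        · have h4' : r + 1 = N' := by omega
          have hme : (i - A' + 1) % N' = (r + 1) % N' :=
            Nat.ModEq.add_right 1 (hr ▸ (Nat.mod_modEq (i - A') N').symm)
          have h5 : ρ (i+1) = A' := by
            simp only [hρ, if_neg (by omega : ¬ i+1 < A'), hsub]
            rw [hme, h4', Nat.mod_self]
            omega
          rw [h3, h5, hit (A' + r)]
          have : A' + r + 1 = A' + N' := by omega
          rw [this, hAN']
          exact hret
  obtain ⟨Y', hY'⟩ := hshad (fun i => f^[ρ i] Y) hpseudo
  exact ⟨Y', A', N', hstep, ⟨j, rfl⟩, ⟨j' - j, by omega, rfl⟩, hY'⟩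

end B

section C
variable {X : Type*} [MetricSpace X] [CompactSpace X] {f : X → X}

lemma construction (hf : Continuous f) (hsh : ShadowingProperty f)
    (x : X) {ε : ℝ} (hε : 0 < ε) :
    ∃ (y z : X) (n : ℕ → ℕ) (κ : ℕ → ℝ) (B : ℕ → ℕ),
      dist x y ≤ ε ∧
      (∀ k, 0 < n k) ∧ (∀ k, n k ∣ n (k+1)) ∧ StrictMono n ∧
      (∀ k, 0 < κ k) ∧ (Tendsto κ atTop (𝓝 0)) ∧
      (∀ k i j, i % n k = j % n k → dist (f^[i] z) (f^[j] z) ≤ κ k) ∧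
      (Tendsto B atTop atTop) ∧
      (∀ k i, B k ≤ i → dist (f^[i] y) (f^[i] z) ≤ κ k) := by
  classical
  set ed : ℕ → ℝ := fun k => ε/2 * (1/2)^k with hed
  have hedpos : ∀ k, 0 < ed k := fun k => by rw [hed]; positivity
  have hex : ∀ (k : ℕ) (p : X × ℕ × ℕ), ∃ q : X × ℕ × ℕ,
      p.2.1 + (k+1) * p.2.2 ≤ q.2.1 ∧ (∃ j, q.2.1 = p.2.1 + j * p.2.2) ∧
      (∃ m, 2 ≤ m ∧ q.2.2 = m * p.2.2) ∧
      (∀ i, dist (f^[i] q.1)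
        (f^[if i < q.2.1 then i else q.2.1 + (i - q.2.1) % q.2.2] p.1) ≤ ed k) := by
    intro k p
    obtain ⟨Y', A', N', h1, h2, h3, h4⟩ := step_exists hsh (hedpos k) p.1 p.2.1 p.2.2 k
    exact ⟨(Y', A', N'), h1, h2, h3, h4⟩
  choose T hT1 hT2 hT3 hT4 using hex
  set G : ℕ → X × ℕ × ℕ := fun k => Nat.rec (x, 0, 1) (fun k ih => T k ih) k with hG
  set Y : ℕ → X := fun k => (G k).1 with hYdef
  set A : ℕ → ℕ := fun k => (G k).2.1 with hAdef
  set N : ℕ → ℕ := fun k => (G k).2.2 with hNdef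
  have hA : ∀ k, A k + (k+1) * N k ≤ A (k+1) := fun k => hT1 k (G k)
  have hAj : ∀ k, ∃ j, A (k+1) = A k + j * N k := fun k => hT2 k (G k)
  have hNj : ∀ k, ∃ m, 2 ≤ m ∧ N (k+1) = m * N k := fun k => hT3 k (G k)
  have c3 : ∀ k i, dist (f^[i] (Y (k+1)))
      (f^[if i < A (k+1) then i else A (k+1) + (i - A (k+1)) % N (k+1)] (Y k)) ≤ ed k :=
    fun k i => hT4 k (G k) i
  have hNpos : ∀ k, 0 < N k := by
    intro k
    induction k with
    | zero => exact Nat.one_pos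
    | succ k ih =>
      obtain ⟨m, hm, hmeq⟩ := hNj k
      rw [hmeq]
      exact Nat.mul_pos (by omega) ih
  have hNmono : ∀ k, N k < N (k+1) := by
    intro k
    obtain ⟨m, hm, hmeq⟩ := hNj k
    rw [hmeq]
    have := hNpos k
    calc N k < 2 * N k := by omega
      _ ≤ m * N k := Nat.mul_le_mul_right _ hm
  have hNdvd : ∀ k, N k ∣ N (k+1) := by
    intro k
    obtain ⟨m, _, hmeq⟩ := hNj k
    exact ⟨m, by rw [hmeq, Nat.mul_comm]⟩
  have hAlt : ∀ k, A k < A (k+1) := by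
    intro k
    have h1 := hA k
    have h2 : 0 < (k+1) * N k := Nat.mul_pos (Nat.succ_pos k) (hNpos k)
    omega
  have hAmono : StrictMono A := strictMono_nat_of_lt_succ hAlt
  have hAgt : ∀ k, k < A (k+1) := by
    intro k
    induction k with
    | zero => have := hAlt 0; omega
    | succ k ih => have := hAlt (k+1); omega
  have submod : ∀ (a b c n : ℕ), c ≤ a → c ≤ b → a % n = b % n →
      (a - c) % n = (b - c) % n := by
    intro a b c n ha hb h
    have h2 : (a - c) + c ≡ (b - c) + c [MOD n] := by
      rw [Nat.sub_add_cancel ha, Nat.sub_add_cancel hb]; exact h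
    exact Nat.ModEq.add_right_cancel' c h2
  have Rk : ∀ k i j, A (k+1) ≤ i → A (k+1) ≤ j → i % N (k+1) = j % N (k+1) →
      dist (f^[i] (Y (k+1))) (f^[j] (Y (k+1))) ≤ 2 * ed k := by
    intro k i j hi hj hmod
    have e1 := c3 k i
    have e2 := c3 k j
    rw [if_neg (by omega)] at e1
    rw [if_neg (by omega)] at e2
    have heq : (i - A (k+1)) % N (k+1) = (j - A (k+1)) % N (k+1) :=
      submod _ _ _ _ hi hj hmod
    rw [heq] at e1
    calc dist (f^[i] (Y (k+1))) (f^[j] (Y (k+1)))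
        ≤ dist (f^[i] (Y (k+1))) (f^[A (k+1) + (j - A (k+1)) % N (k+1)] (Y k)) +
          dist (f^[A (k+1) + (j - A (k+1)) % N (k+1)] (Y k)) (f^[j] (Y (k+1))) :=
          dist_triangle _ _ _
      _ ≤ ed k + ed k := add_le_add e1 (by rw [dist_comm]; exact e2)
      _ = 2 * ed k := by ring
  have hYstep : ∀ k, dist (Y k) (Y (k+1)) ≤ ed k := by
    intro k
    have e := c3 k 0
    have h0 : (if (0:ℕ) < A (k+1) then (0:ℕ) else A (k+1) + (0 - A (k+1)) % N (k+1)) = 0 := by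
      by_cases h : 0 < A (k+1)
      · simp [h]
      · simp only [if_neg h]
        have hA0 : A (k+1) = 0 := by omega
        rw [hA0]
        simp
    rw [h0] at e
    rw [dist_comm]
    simpa using e
  have hYcauchy : CauchySeq Y := by
    apply cauchySeq_of_le_geometric (1/2 : ℝ) (ε/2) (by norm_num)
    intro k
    simpa [hed] using hYstep k
  obtain ⟨y, hy⟩ := cauchySeq_tendsto_of_complete hYcauchy
  have hxy : dist x y ≤ ε := by
    have h := tail_est hy (le_of_lt (half_pos hε)) 0 (fun m _ => by simpa [hed] using hYstep m)
    have hx0 : Y 0 = x := rfl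
    rw [hx0] at h
    calc dist x y ≤ 2 * (ε/2) * (1/2)^0 := h
      _ = ε := by ring
  have hIT : ∀ k i, i ≤ A (k+2) → dist (f^[i] (Y (k+1))) (f^[i] y) ≤ ε * (1/2)^(k+1) := by
    intro k i hi
    have hlim : Tendsto (fun m => f^[i] (Y m)) atTop (𝓝 (f^[i] y)) :=
      ((hf.iterate i).tendsto y).comp hy
    have hbnd : ∀ m, k+1 ≤ m → dist (f^[i] (Y m)) (f^[i] (Y (m+1))) ≤ (ε/2) * (1/2)^m := by
      intro m hm
      have e := c3 m i
      have hiA : i ≤ A (m+1) := le_trans hi (hAmono.monotone (show k + 2 ≤ m + 1 by omega))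
      have hif : (if i < A (m+1) then i else A (m+1) + (i - A (m+1)) % N (m+1)) = i := by
        by_cases h : i < A (m+1)
        · simp [h]
        · have hAe : i = A (m+1) := by omega
          simp only [if_neg h, hAe]
          simp
      rw [hif] at e
      rw [dist_comm]
      simpa [hed] using e
    have h := tail_est hlim (le_of_lt (half_pos hε)) (k+1) hbnd
    calc dist (f^[i] (Y (k+1))) (f^[i] y) ≤ 2 * (ε/2) * (1/2)^(k+1) := h
      _ = ε * (1/2)^(k+1) := by ring
  set t : ℕ → ℕ → ℕ :=
    fun k c => A (k+1) + (c + (N (k+1) - A (k+1) % N (k+1))) % N (k+1) with ht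
  have ht1 : ∀ k c, A (k+1) ≤ t k c ∧ t k c < A (k+1) + N (k+1) := by
    intro k c
    refine ⟨Nat.le_add_right _ _, ?_⟩
    have := Nat.mod_lt (c + (N (k+1) - A (k+1) % N (k+1))) (hNpos (k+1))
    simp only [ht]
    omega
  have ht2 : ∀ k c, t k c % N (k+1) = c % N (k+1) := by
    intro k c
    simp only [ht]
    have h1 : A (k+1) % N (k+1) < N (k+1) := Nat.mod_lt _ (hNpos (k+1))
    have h2 : A (k+1) % N (k+1) + N (k+1) * (A (k+1) / N (k+1)) = A (k+1) :=
      Nat.mod_add_div _ _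
    have e1 : (A (k+1) + (c + (N (k+1) - A (k+1) % N (k+1))) % N (k+1)) % N (k+1)
        = (A (k+1) + (c + (N (k+1) - A (k+1) % N (k+1)))) % N (k+1) := by
      conv_lhs => rw [Nat.add_mod]
      conv_rhs => rw [Nat.add_mod]
      rw [Nat.mod_mod_of_dvd _ (dvd_refl _)]
    rw [e1]
    have e2 : A (k+1) + (c + (N (k+1) - A (k+1) % N (k+1)))
        = c + (1 + A (k+1) / N (k+1)) * N (k+1) := by
      have : (1 + A (k+1) / N (k+1)) * N (k+1) = N (k+1) + N (k+1) * (A (k+1) / N (k+1)) := by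
        ring
      omega
    rw [e2, Nat.add_mul_mod_self_right]
  have ht3 : ∀ k c c', c % N (k+1) = c' % N (k+1) → t k c = t k c' := by
    intro k c c' h
    simp only [ht]
    congr 1
    exact Nat.ModEq.add_right _ h
  set v : ℕ → ℕ → X := fun k c => f^[t k c] (Y (k+1)) with hv
  have hV1 : ∀ k c, dist (v k c) (v (k+1) c) ≤ 2 * ε * (1/2)^k := by
    intro k c
    have e1 := c3 (k+1) (t (k+1) c)
    obtain ⟨htl, htr⟩ := ht1 (k+1) c
    have hin : (if t (k+1) c < A (k+2) then t (k+1) c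
        else A (k+2) + (t (k+1) c - A (k+2)) % N (k+2)) = t (k+1) c := by
      by_cases h : t (k+1) c < A (k+2)
      · simp [h]
      · simp only [if_neg h]
        have htl' : A (k+2) ≤ t (k+1) c := htl
        have htr' : t (k+1) c < A (k+2) + N (k+2) := htr
        have hlt : t (k+1) c - A (k+2) < N (k+2) := by omega
        rw [Nat.mod_eq_of_lt hlt]
        omega
    rw [hin] at e1
    have e2 : dist (f^[t (k+1) c] (Y (k+1))) (f^[t k c] (Y (k+1))) ≤ 2 * ed k := by
      apply Rk k _ _ (le_trans (le_of_lt (hAlt (k+1))) htl) (ht1 k c).1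
      have ha := ht2 (k+1) c
      have hb := ht2 k c
      have hc : t (k+1) c % N (k+1) = c % N (k+1) := by
        rw [← Nat.mod_mod_of_dvd (t (k+1) c) (hNdvd (k+1)), ha,
          Nat.mod_mod_of_dvd _ (hNdvd (k+1))]
      rw [hc, hb]
    have htri : dist (v k c) (v (k+1) c) ≤ 2 * ed k + ed (k+1) := by
      calc dist (v k c) (v (k+1) c)
          ≤ dist (v k c) (f^[t (k+1) c] (Y (k+1))) +
            dist (f^[t (k+1) c] (Y (k+1))) (v (k+1) c) := dist_triangle _ _ _
        _ ≤ 2 * ed k + ed (k+1) := by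
            apply add_le_add
            · rw [dist_comm]; exact e2
            · rw [dist_comm]; exact e1
    have hppos : (0:ℝ) < (1/2)^k := by positivity
    calc dist (v k c) (v (k+1) c) ≤ 2 * ed k + ed (k+1) := htri
      _ ≤ 2 * ε * (1/2)^k := by
          simp only [hed, pow_succ]
          nlinarith
  have hVex : ∀ c, ∃ p, Tendsto (fun k => v k c) atTop (𝓝 p) := by
    intro c
    apply cauchySeq_tendsto_of_complete
    apply cauchySeq_of_le_geometric (1/2 : ℝ) (2*ε) (by norm_num)
    intro k
    simpa using hV1 k c
  choose V hVt using hVex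
  have hVtail : ∀ k c, dist (v k c) (V c) ≤ 4 * ε * (1/2)^k := by
    intro k c
    have h := tail_est (hVt c) (by positivity : (0:ℝ) ≤ 2*ε) k (fun m _ => hV1 m c)
    calc dist (v k c) (V c) ≤ 2 * (2*ε) * (1/2)^k := h
      _ = 4 * ε * (1/2)^k := by ring
  have hVstep : ∀ c, f (V c) = V (c+1) := by
    intro c
    have hb : ∀ k, dist (f (V c)) (V (c+1)) ≤
        dist (f (V c)) (f (v k c)) + 2 * ed k + dist (v k (c+1)) (V (c+1)) := by
      intro k
      have hd2 : dist (f (v k c)) (v k (c+1)) ≤ 2 * ed k := by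
        have hter := (ht1 k c).2
        have hit2 : f (v k c) = f^[t k c + 1] (Y (k+1)) :=
          (Function.iterate_succ_apply' f (t k c) (Y (k+1))).symm
        have hmodeq : (c + 1 + (N (k+1) - A (k+1) % N (k+1))) % N (k+1)
            = ((c + (N (k+1) - A (k+1) % N (k+1))) % N (k+1) + 1) % N (k+1) := by
          have h := (Nat.mod_modEq (c + (N (k+1) - A (k+1) % N (k+1))) (N (k+1))).add_right 1
          have e : c + 1 + (N (k+1) - A (k+1) % N (k+1))
              = c + (N (k+1) - A (k+1) % N (k+1)) + 1 := by omega
          rw [e]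
          exact h.symm
        rcases Nat.lt_or_ge (t k c + 1) (A (k+1) + N (k+1)) with hcase | hcase
        · have hlt : (c + (N (k+1) - A (k+1) % N (k+1))) % N (k+1) + 1 < N (k+1) := by
            simp only [ht] at hcase
            omega
          have heq : t k (c+1) = t k c + 1 := by
            simp only [ht]
            rw [hmodeq, Nat.mod_eq_of_lt hlt]
            omega
          rw [hit2, ← heq, hv]
          simp
          positivity
        · have hca : t k c + 1 = A (k+1) + N (k+1) := by omega
          have hfull : (c + (N (k+1) - A (k+1) % N (k+1))) % N (k+1) + 1 = N (k+1) := by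
            simp only [ht] at hca
            omega
          have heq0 : t k (c+1) = A (k+1) := by
            simp only [ht]
            rw [hmodeq, hfull, Nat.mod_self]
            omega
          have e1 := c3 k (A (k+1) + N (k+1))
          rw [if_neg (by omega)] at e1
          have hsb : (A (k+1) + N (k+1) - A (k+1)) % N (k+1) = 0 := by
            have hq : A (k+1) + N (k+1) - A (k+1) = N (k+1) := by omega
            rw [hq, Nat.mod_self]
          rw [hsb] at e1
          have e2 := c3 k (A (k+1))
          have hif2 : (if A (k+1) < A (k+1) then A (k+1)
              else A (k+1) + (A (k+1) - A (k+1)) % N (k+1)) = A (k+1) := by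
            simp
          rw [hif2] at e2
          rw [hit2, hca]
          simp only [hv]
          rw [heq0]
          simp only [Nat.add_zero] at e1
          calc dist (f^[A (k+1) + N (k+1)] (Y (k+1))) (f^[A (k+1)] (Y (k+1)))
              ≤ dist (f^[A (k+1) + N (k+1)] (Y (k+1))) (f^[A (k+1)] (Y k)) +
                dist (f^[A (k+1)] (Y k)) (f^[A (k+1)] (Y (k+1))) := dist_triangle _ _ _
            _ ≤ ed k + ed k := add_le_add e1 (by rw [dist_comm]; exact e2)
            _ = 2 * ed k := by ring
      calc dist (f (V c)) (V (c+1))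
          ≤ dist (f (V c)) (f (v k c)) + dist (f (v k c)) (V (c+1)) := dist_triangle _ _ _
        _ ≤ dist (f (V c)) (f (v k c)) + (dist (f (v k c)) (v k (c+1)) +
            dist (v k (c+1)) (V (c+1))) := by
            have := dist_triangle (f (v k c)) (v k (c+1)) (V (c+1))
            linarith
        _ ≤ dist (f (V c)) (f (v k c)) + 2 * ed k + dist (v k (c+1)) (V (c+1)) := by
            linarith
    have hlim : Tendsto (fun k => dist (f (V c)) (f (v k c)) + 2 * ed k +
        dist (v k (c+1)) (V (c+1))) atTop (𝓝 0) := by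
      have l1 : Tendsto (fun k => dist (f (V c)) (f (v k c))) atTop (𝓝 0) := by
        have h2 : Tendsto (fun k => f (v k c)) atTop (𝓝 (f (V c))) :=
          (hf.tendsto (V c)).comp (hVt c)
        have h3 := (tendsto_const_nhds : Tendsto (fun _ : ℕ => f (V c)) atTop (𝓝 (f (V c)))).dist h2
        simpa using h3
      have l2 : Tendsto (fun k => 2 * ed k) atTop (𝓝 0) := by
        have hp : Tendsto (fun k : ℕ => ((1:ℝ)/2)^k) atTop (𝓝 0) :=
          tendsto_pow_atTop_nhds_zero_of_lt_one (by norm_num) (by norm_num)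
        have := hp.const_mul (2 * (ε/2))
        simpa [hed, mul_assoc] using this
      have l3 : Tendsto (fun k => dist (v k (c+1)) (V (c+1))) atTop (𝓝 0) :=
        tendsto_iff_dist_tendsto_zero.mp (hVt (c+1))
      have := (l1.add l2).add l3
      simpa using this
    have hle : dist (f (V c)) (V (c+1)) ≤ 0 := ge_of_tendsto hlim (Eventually.of_forall hb)
    exact eq_of_dist_eq_zero (le_antisymm hle dist_nonneg)
  set z := V 0 with hzdef
  have hVz : ∀ c, f^[c] z = V c := by
    intro c
    induction c with
    | zero => rfl
    | succ c ih => rw [Function.iterate_succ_apply', ih, hVstep]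
  refine ⟨y, z, fun k => N (k+1), fun k => 8 * ε * (1/2)^k, fun k => A (k+1),
    hxy, fun k => hNpos (k+1), fun k => hNdvd (k+1), ?_, ?_, ?_, ?_, ?_, ?_⟩
  · have hNstrict : StrictMono N := strictMono_nat_of_lt_succ hNmono
    exact fun a b hab => hNstrict (Nat.succ_lt_succ hab)
  · intro k
    positivity
  · have hp : Tendsto (fun k : ℕ => ((1:ℝ)/2)^k) atTop (𝓝 0) :=
      tendsto_pow_atTop_nhds_zero_of_lt_one (by norm_num) (by norm_num)
    have := hp.const_mul (8 * ε)
    simpa using this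
  · intro k i j hmod
    rw [hVz i, hVz j]
    have hvv : v k i = v k j := by
      simp only [hv]
      rw [ht3 k i j hmod]
    calc dist (V i) (V j) ≤ dist (V i) (v k i) + dist (v k i) (V j) := dist_triangle _ _ _
      _ = dist (V i) (v k i) + dist (v k j) (V j) := by rw [hvv]
      _ ≤ 4 * ε * (1/2)^k + 4 * ε * (1/2)^k := by
          apply add_le_add
          · rw [dist_comm]; exact hVtail k i
          · exact hVtail k j
      _ = 8 * ε * (1/2)^k := by ring
  · exact tendsto_atTop_mono (fun k => le_of_lt (hAgt k)) tendsto_id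
  · intro k i hik
    set P : ℕ → Prop := fun m => A (m+1) ≤ i with hP
    have hPk : P k := hik
    have hk_le : k ≤ i := le_trans (le_of_lt (hAgt k)) hik
    set M := Nat.findGreatest P i with hM
    have hM1 : k ≤ M := Nat.le_findGreatest hk_le hPk
    have hM2 : P M := Nat.findGreatest_spec hk_le hPk
    have hM3 : i < A (M+2) := by
      by_contra hcon
      push_neg at hcon
      have hPM1 : P (M+1) := hcon
      have hle : M + 1 ≤ i := le_trans (le_of_lt (hAgt (M+1))) hPM1
      exact Nat.findGreatest_is_greatest (Nat.lt_succ_self M) hle hPM1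
    have comp1 : dist (f^[i] y) (f^[i] (Y (M+1))) ≤ ε * (1/2)^(M+1) := by
      rw [dist_comm]
      exact hIT M i (le_of_lt hM3)
    have comp2 : dist (f^[i] (Y (M+1))) (v M i) ≤ 2 * ed M := by
      simp only [hv]
      exact Rk M i (t M i) hM2 (ht1 M i).1 (ht2 M i).symm
    have comp3 : dist (v M i) (V i) ≤ 4 * ε * (1/2)^M := hVtail M i
    rw [hVz i]
    have hMk : ((1:ℝ)/2)^M ≤ (1/2)^k := pow_le_pow_of_le_one (by norm_num) (by norm_num) hM1
    have hppos : (0:ℝ) < (1/2)^M := by positivity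
    calc dist (f^[i] y) (V i)
        ≤ dist (f^[i] y) (f^[i] (Y (M+1))) + dist (f^[i] (Y (M+1))) (v M i) +
          dist (v M i) (V i) := dist_triangle4 _ _ _ _
      _ ≤ ε * (1/2)^(M+1) + 2 * ed M + 4 * ε * (1/2)^M := by
          apply add_le_add (add_le_add comp1 comp2) comp3
      _ ≤ 8 * ε * (1/2)^M := by
          simp only [hed, pow_succ]
          nlinarith
      _ ≤ 8 * ε * (1/2)^k := by nlinarith



end C

section Dnat

lemma nat1 (a b m : ℕ) (ha : a < m) (hb : b < m) :
    ((a + (m - b) % m) % m + b) % m = a := by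
  rcases Nat.eq_zero_or_pos b with hb0 | hbpos
  · subst hb0
    simp [Nat.mod_self, Nat.mod_eq_of_lt ha]
  · have h1 : (m - b) % m = m - b := Nat.mod_eq_of_lt (by omega)
    rw [h1, Nat.mod_add_mod]
    have h2 : a + (m - b) + b = a + m := by omega
    rw [h2, Nat.add_mod_right, Nat.mod_eq_of_lt ha]

lemma nat2 (b m : ℕ) (hm : 0 < m) (hb : b < m) : (b + (m - b) % m) % m = 0 := by
  rcases Nat.eq_zero_or_pos b with hb0 | hbpos
  · subst hb0
    simp [Nat.mod_self]
  · rw [show (m - b) % m = m - b from Nat.mod_eq_of_lt (by omega)]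
    have : b + (m - b) = m := by omega
    rw [this, Nat.mod_self]

/-- descent of coherence -/
lemma desc_coh (n : ℕ → ℕ) (hnd : ∀ k, n k ∣ n (k+1)) (g : ℕ → ℕ)
    (hg : ∀ k, g (k+1) % n k = g k) : ∀ k m, k ≤ m → g m % n k = g k := by
  intro k m hkm
  induction m with
  | zero =>
    have hk0 : k = 0 := Nat.le_zero.mp hkm
    subst hk0
    have := hg 0
    -- g 0 % n 0 = ?: we need g 0 % n 0 = g 0; from hg 0 : g 1 % n 0 = g 0, so g 0 < n 0? no.
    -- instead: g 0 % n 0 = (g 1 % n 0) % n 0 = g 1 % n 0 = g 0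
    rw [← this, Nat.mod_mod_of_dvd _ (dvd_refl _)]
  | succ m ih =>
    rcases Nat.lt_or_ge k (m+1) with h | h
    · have hdvd : n k ∣ n m := by
        clear ih
        have : ∀ j, n k ∣ n (k + j) := by
          intro j
          induction j with
          | zero => exact dvd_refl _
          | succ j ihj => exact dvd_trans ihj (hnd (k + j))
        have hx := this (m - k)
        rwa [Nat.add_sub_cancel' (by omega)] at hx
      rw [← ih (by omega), ← hg m, Nat.mod_mod_of_dvd _ hdvd]
    · have hk : k = m + 1 := by omega
      subst hk
      rw [← hg (m+1), Nat.mod_mod_of_dvd _ (dvd_refl _)]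

lemma dvd_chain (n : ℕ → ℕ) (hnd : ∀ k, n k ∣ n (k+1)) :
    ∀ k m, k ≤ m → n k ∣ n m := by
  intro k m hkm
  have : ∀ j, n k ∣ n (k + j) := by
    intro j
    induction j with
    | zero => exact dvd_refl _
    | succ j ihj => exact dvd_trans ihj (hnd (k + j))
  have hx := this (m - k)
  rwa [Nat.add_sub_cancel' hkm] at hx

end Dnat

section D
variable {X : Type*} [MetricSpace X] [CompactSpace X] {f : X → X}

lemma tendsto_of_close {u w : ℕ → X} {p : X} (hu : Tendsto u atTop (𝓝 p)) {d : ℕ → ℝ}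
    (hd : Tendsto d atTop (𝓝 0)) (h : ∀ k, dist (w k) (u k) ≤ d k) :
    Tendsto w atTop (𝓝 p) := by
  rw [tendsto_iff_dist_tendsto_zero]
  apply squeeze_zero (fun k => dist_nonneg) (g := fun k => d k + dist (u k) p)
  · intro k
    calc dist (w k) p ≤ dist (w k) (u k) + dist (u k) p := dist_triangle _ _ _
      _ ≤ d k + dist (u k) p := by have := h k; linarith
  · simpa using hd.add (tendsto_iff_dist_tendsto_zero.mp hu)

lemma periodic_or_odometer (hf : Continuous f) (z : X) (n : ℕ → ℕ) (κ : ℕ → ℝ)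
    (hn1 : ∀ k, 0 < n k) (hnd : ∀ k, n k ∣ n (k+1)) (hnm : StrictMono n)
    (hκ : Tendsto κ atTop (𝓝 0))
    (hR : ∀ k i j, i % n k = j % n k → dist (f^[i] z) (f^[j] z) ≤ κ k) :
    IsPeriodicOrbit f (omegaLimitPt f z) ∨ IsOdometer f (omegaLimitPt f z) := by
  classical
  have hκ0 : ∀ k, 0 ≤ κ k := fun k => le_trans dist_nonneg (hR k 0 0 rfl)
  set Γ : Set (ℕ → ℕ) := {g | ∀ k, g k < n k ∧ g (k+1) % n k = g k} with hΓ
  set addG : (ℕ → ℕ) → (ℕ → ℕ) → (ℕ → ℕ) := fun g h => fun k => (g k + h k) % n k with haddG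
  set invG : (ℕ → ℕ) → (ℕ → ℕ) := fun g => fun k => (n k - g k) % n k with hinvG
  set natG : ℕ → (ℕ → ℕ) := fun c => fun k => c % n k with hnatG
  have natG_mem : ∀ c, natG c ∈ Γ := by
    intro c k
    exact ⟨Nat.mod_lt _ (hn1 k), Nat.mod_mod_of_dvd _ (hnd k)⟩
  have addG_mem : ∀ g h, g ∈ Γ → h ∈ Γ → addG g h ∈ Γ := by
    intro g h hg hh k
    refine ⟨Nat.mod_lt _ (hn1 k), ?_⟩
    show (g (k+1) + h (k+1)) % n (k+1) % n k = (g k + h k) % n k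
    rw [Nat.mod_mod_of_dvd _ (hnd k), Nat.add_mod, (hg k).2, (hh k).2]
  have invG_mem : ∀ g, g ∈ Γ → invG g ∈ Γ := by
    intro g hg k
    refine ⟨Nat.mod_lt _ (hn1 k), ?_⟩
    show (n (k+1) - g (k+1)) % n (k+1) % n k = (n k - g k) % n k
    rw [Nat.mod_mod_of_dvd _ (hnd k)]
    have hmod : (n (k+1) - g (k+1)) + g (k+1) ≡ (n k - g k) + g (k+1) [MOD n k] := by
      have h1 : n (k+1) - g (k+1) + g (k+1) = n (k+1) := by
        have := (hg (k+1)).1; omega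
      rw [h1]
      have h2 : (n k - g k) + g (k+1) ≡ (n k - g k) + g k [MOD n k] := by
        apply Nat.ModEq.add_left
        show g (k+1) % n k = g k % n k
        rw [(hg k).2]
        exact (Nat.mod_eq_of_lt (hg k).1).symm
      have h3 : (n k - g k) + g k = n k := by
        have := (hg k).1; omega
      calc n (k+1) ≡ 0 [MOD n k] := (Nat.modEq_zero_iff_dvd).mpr (dvd_chain n hnd k (k+1) (by omega))
        _ ≡ n k [MOD n k] := by
            rw [Nat.ModEq, Nat.zero_mod, Nat.mod_self]
        _ ≡ (n k - g k) + g k [MOD n k] := by rw [h3]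
        _ ≡ (n k - g k) + g (k+1) [MOD n k] := h2.symm
    exact Nat.ModEq.add_right_cancel' _ hmod
  set nsmulG : ℕ → (ℕ → ℕ) → (ℕ → ℕ) :=
    fun t ν => Nat.rec (natG 0) (fun _ ih => addG ν ih) t with hnsmulG
  have nsmul_mem : ∀ t ν, ν ∈ Γ → nsmulG t ν ∈ Γ := by
    intro t ν hν
    induction t with
    | zero => exact natG_mem 0
    | succ t ih => exact addG_mem _ _ hν ih
  have nsmul_coord : ∀ t ν k, ν k < n k → (nsmulG t ν) k = (t * ν k) % n k := by
    intro t ν k hν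
    induction t with
    | zero =>
      show 0 % n k = 0 * ν k % n k
      simp
    | succ t ih =>
      show (ν k + (nsmulG t ν) k) % n k = ((t+1) * ν k) % n k
      rw [ih, Nat.add_mod_mod]
      congr 1
      ring
  -- the limit map φ
  have hconv : ∀ g ∈ Γ, ∀ k m, k ≤ m → dist (f^[g m] z) (f^[g k] z) ≤ κ k := by
    intro g hg k m hkm
    apply hR
    rw [desc_coh n hnd g (fun j => (hg j).2) k m hkm, Nat.mod_eq_of_lt (hg k).1]
  have hφex : ∀ g : ℕ → ℕ, ∃ p, g ∈ Γ → Tendsto (fun k => f^[g k] z) atTop (𝓝 p) := by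
    intro g
    by_cases hg : g ∈ Γ
    · have hcau : CauchySeq (fun k => f^[g k] z) := by
        rw [Metric.cauchySeq_iff']
        intro η hη
        obtain ⟨K, hK⟩ := (hκ.eventually (gt_mem_nhds hη)).exists
        exact ⟨K, fun m hm => lt_of_le_of_lt (hconv g hg K m hm) hK⟩
      obtain ⟨p, hp⟩ := cauchySeq_tendsto_of_complete hcau
      exact ⟨p, fun _ => hp⟩
    · exact ⟨z, fun h => absurd h hg⟩
  choose φ hφ using hφex
  have F1 : ∀ g ∈ Γ, ∀ k, dist (φ g) (f^[g k] z) ≤ κ k := by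
    intro g hg k
    apply le_of_tendsto ((hφ g hg).dist tendsto_const_nhds)
    filter_upwards [eventually_ge_atTop k] with m hm
    exact hconv g hg k m hm
  have Fc : ∀ c, φ (natG c) = f^[c] z := by
    intro c
    apply tendsto_nhds_unique (hφ _ (natG_mem c))
    apply tendsto_const_nhds.congr'
    filter_upwards [eventually_ge_atTop (c+1)] with k hk
    have hck : c < n k := lt_of_lt_of_le (by omega) (le_trans hk hnm.le_apply)
    show f^[c] z = f^[c % n k] z
    rw [Nat.mod_eq_of_lt hck]
  have F2 : ∀ g ∈ Γ, ∀ c, φ (addG g (natG c)) = f^[c] (φ g) := by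
    intro g hg c
    apply tendsto_nhds_unique (hφ _ (addG_mem _ _ hg (natG_mem c)))
    apply tendsto_of_close (((hf.iterate c).tendsto (φ g)).comp (hφ g hg)) hκ
    intro k
    show dist (f^[(g k + c % n k) % n k] z) (f^[c] (f^[g k] z)) ≤ κ k
    rw [← Function.iterate_add_apply]
    apply hR
    rw [Nat.mod_mod_of_dvd _ (dvd_refl _), Nat.add_mod_mod]
    congr 1
    omega
  have F3 : ∀ g ∈ Γ, ∀ g' ∈ Γ, ∀ k, g k = g' k → dist (φ g) (φ g') ≤ 2 * κ k := by
    intro g hg g' hg' k hk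
    calc dist (φ g) (φ g') ≤ dist (φ g) (f^[g k] z) + dist (f^[g k] z) (φ g') :=
        dist_triangle _ _ _
      _ ≤ κ k + κ k := by
          apply add_le_add (F1 g hg k)
          rw [hk, dist_comm]
          exact F1 g' hg' k
      _ = 2 * κ k := by ring
  have F4 : ∀ g ∈ Γ, ∀ g' ∈ Γ, ∀ h ∈ Γ, φ g = φ g' → φ (addG g h) = φ (addG g' h) := by
    intro g hg g' hg' h hh heq
    have hbnd : ∀ k, dist (φ (addG g h)) (φ (addG g' h)) ≤ 4 * κ k := by
      intro k
      have e1 : dist (φ (addG g h)) (φ (addG g (natG (h k)))) ≤ 2 * κ k := by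
        apply F3 _ (addG_mem _ _ hg hh) _ (addG_mem _ _ hg (natG_mem (h k))) k
        show (g k + h k) % n k = (g k + h k % n k) % n k
        rw [Nat.mod_eq_of_lt (hh k).1]
      have e2 : φ (addG g (natG (h k))) = φ (addG g' (natG (h k))) := by
        rw [F2 g hg (h k), F2 g' hg' (h k), heq]
      have e3 : dist (φ (addG g' (natG (h k)))) (φ (addG g' h)) ≤ 2 * κ k := by
        apply F3 _ (addG_mem _ _ hg' (natG_mem (h k))) _ (addG_mem _ _ hg' hh) k
        show (g' k + h k % n k) % n k = (g' k + h k) % n k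
        rw [Nat.mod_eq_of_lt (hh k).1]
      calc dist (φ (addG g h)) (φ (addG g' h))
          ≤ dist (φ (addG g h)) (φ (addG g (natG (h k)))) +
            dist (φ (addG g (natG (h k)))) (φ (addG g' h)) := dist_triangle _ _ _
        _ ≤ 2 * κ k + (2 * κ k) := by
            apply add_le_add e1
            rw [e2]
            exact e3
        _ = 4 * κ k := by ring
    have hzero : dist (φ (addG g h)) (φ (addG g' h)) ≤ 0 := by
      have h4 : Tendsto (fun k => 4 * κ k) atTop (𝓝 (0:ℝ)) := by
        simpa using hκ.const_mul (4:ℝ)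
      exact ge_of_tendsto h4 (Eventually.of_forall hbnd)
    exact eq_of_dist_eq_zero (le_antisymm hzero dist_nonneg)
  -- the subgroup N and the divisor sequence e
  set Nset : Set (ℕ → ℕ) := {ν | ν ∈ Γ ∧ φ ν = z} with hNset
  have hzero_add : ∀ g, g ∈ Γ → addG (natG 0) g = g := by
    intro g hg
    funext k
    show (0 % n k + g k) % n k = g k
    rw [Nat.zero_mod, Nat.zero_add, Nat.mod_eq_of_lt (hg k).1]
  have hφ0 : φ (natG 0) = z := by
    have := Fc 0
    simpa using this
  have Nmem0 : natG 0 ∈ Nset := ⟨natG_mem 0, hφ0⟩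
  have NmemAdd : ∀ ν ∈ Nset, ∀ ν' ∈ Nset, addG ν ν' ∈ Nset := by
    rintro ν ⟨hνΓ, hνz⟩ ν' ⟨hν'Γ, hν'z⟩
    refine ⟨addG_mem _ _ hνΓ hν'Γ, ?_⟩
    have := F4 ν hνΓ (natG 0) (natG_mem 0) ν' hν'Γ (by rw [hνz, hφ0])
    rw [this, hzero_add ν' hν'Γ, hν'z]
  have NmemSmul : ∀ t, ∀ ν ∈ Nset, nsmulG t ν ∈ Nset := by
    intro t ν hν
    induction t with
    | zero => exact Nmem0
    | succ t ih => exact NmemAdd ν hν _ ih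
  -- characterization of φ-equality via Nset
  have dchar1 : ∀ g ∈ Γ, ∀ g' ∈ Γ, φ g = φ g' → addG g (invG g') ∈ Nset := by
    intro g hg g' hg' heq
    refine ⟨addG_mem _ _ hg (invG_mem _ hg'), ?_⟩
    have h1 := F4 g hg g' hg' (invG g') (invG_mem _ hg') heq
    have h2 : addG g' (invG g') = natG 0 := by
      funext k
      show (g' k + (n k - g' k) % n k) % n k = 0 % n k
      rw [Nat.zero_mod]
      exact nat2 (g' k) (n k) (hn1 k) (hg' k).1
    rw [h1, h2, hφ0]
  have hadd_inv_add : ∀ g ∈ Γ, ∀ g' ∈ Γ, addG (addG g (invG g')) g' = g := by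
    intro g hg g' hg'
    funext k
    show ((g k + (n k - g' k) % n k) % n k + g' k) % n k = g k
    exact nat1 (g k) (g' k) (n k) (hg k).1 (hg' k).1
  have dchar2 : ∀ g ∈ Γ, ∀ g' ∈ Γ, addG g (invG g') ∈ Nset → φ g = φ g' := by
    intro g hg g' hg' ⟨hνΓ, hνz⟩
    have h1 := F4 _ hνΓ (natG 0) (natG_mem 0) g' hg' (by rw [hνz, hφ0])
    rw [hadd_inv_add g hg g' hg', hzero_add g' hg'] at h1
    exact h1
  -- the divisor sequence
  set E : ℕ → Set ℕ := fun k => {r | 0 < r ∧ ∃ ν ∈ Nset, ν k = r} ∪ {n k} with hE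
  set e : ℕ → ℕ := fun k => sInf (E k) with he
  have hEne : ∀ k, (E k).Nonempty := fun k => ⟨n k, Or.inr rfl⟩
  have heMem : ∀ k, e k ∈ E k := fun k => Nat.sInf_mem (hEne k)
  have hepos : ∀ k, 0 < e k := by
    intro k
    rcases heMem k with h | h
    · exact h.1
    · rw [h]; exact hn1 k
  have heLe : ∀ k, e k ≤ n k := fun k => Nat.sInf_le (Or.inr rfl)
  have helow : ∀ k, ∀ ν ∈ Nset, 0 < ν k → e k ≤ ν k :=
    fun k ν hν hpos => Nat.sInf_le (Or.inl ⟨hpos, ν, hν, rfl⟩)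
  have keyk : ∀ k, (∃ ν ∈ Nset, ν k = e k) ∨ e k = n k := by
    intro k
    rcases heMem k with h | h
    · exact Or.inl h.2
    · exact Or.inr h
  have hzerok : ∀ k, e k = n k → ∀ ν ∈ Nset, ν k = 0 := by
    intro k hek ν hν
    by_contra hne
    have hpos : 0 < ν k := Nat.pos_of_ne_zero hne
    have h1 := helow k ν hν hpos
    have h2 : ν k < n k := (hν.1 k).1
    omega
  have hediv : ∀ k, e k ∣ n k := by
    intro k
    rcases keyk k with ⟨ν, hν, hco⟩ | h
    · by_contra hnd2
      have hr : 0 < n k % e k := Nat.pos_of_ne_zero (fun h0 => hnd2 ((Nat.dvd_iff_mod_eq_zero.mpr h0)))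
      set r := n k % e k with hrdef
      have hrlt : r < e k := Nat.mod_lt _ (hepos k)
      set t := n k / e k + 1 with htdef
      have hdm : e k * (n k / e k) + r = n k := Nat.div_add_mod _ _
      have hμ := NmemSmul t ν hν
      have hμco : (nsmulG t ν) k = e k - r := by
        rw [nsmul_coord t ν k (hν.1 k).1, hco]
        have h1 : t * e k = n k + (e k - r) := by
          have hc : t * e k = (n k / e k) * e k + e k := by rw [htdef]; ring
          have hcomm : (n k / e k) * e k = e k * (n k / e k) := Nat.mul_comm _ _
          omega
        rw [h1, Nat.add_mod_left, Nat.mod_eq_of_lt (by have := heLe k; omega)]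
      have := helow k _ hμ (by omega)
      omega
    · rw [h]
  have hmul : ∀ k r, r < n k → e k ∣ r → ∃ ν ∈ Nset, ν k = r := by
    intro k r hrlt hdr
    rcases keyk k with ⟨ν, hν, hco⟩ | h
    · refine ⟨nsmulG (r / e k) ν, NmemSmul _ ν hν, ?_⟩
      rw [nsmul_coord _ ν k (hν.1 k).1, hco, Nat.div_mul_cancel hdr, Nat.mod_eq_of_lt hrlt]
    · have : r = 0 := by
        rcases hdr with ⟨c, hc⟩
        rcases Nat.eq_zero_or_pos c with h0 | hcp
        · rw [hc, h0, Nat.mul_zero]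
        · exfalso
          have : n k ≤ r := by
            rw [hc, ← h]
            calc e k = e k * 1 := by ring
              _ ≤ e k * c := Nat.mul_le_mul_left _ hcp
          omega
      refine ⟨natG 0, Nmem0, ?_⟩
      rw [this]
      exact Nat.zero_mod _
  have hNdvdMod : ∀ k, ∀ ν ∈ Nset, e k ∣ ν k := by
    intro k ν hν
    rcases Nat.eq_zero_or_pos (ν k) with h0 | hpos
    · rw [h0]; exact Dvd.intro 0 rfl
    · by_contra hnd2
      have hr' : 0 < ν k % e k := Nat.pos_of_ne_zero (fun h0 => hnd2 ((Nat.dvd_iff_mod_eq_zero.mpr h0)))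
      set r' := ν k % e k with hr'def
      have hr'lt : r' < e k := Nat.mod_lt _ (hepos k)
      have heklt : e k < n k := lt_of_le_of_lt (helow k ν hν hpos) (hν.1 k).1
      obtain ⟨ν0, hν0, hν0co⟩ : ∃ ν0 ∈ Nset, ν0 k = e k := by
        rcases keyk k with h | h
        · exact h
        · omega
      set q := n k / e k with hqdef
      have hq : e k * q = n k := Nat.mul_div_cancel' (hediv k)
      have hq1 : 1 < q := by
        rcases Nat.lt_or_ge 1 q with h | h
        · exact h
        · exfalso
          rcases Nat.eq_zero_or_pos q with h0 | hq0
          · rw [h0, Nat.mul_zero] at hq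
            have := hn1 k
            omega
          · have hq11 : q = 1 := by omega
            rw [hq11, Nat.mul_one] at hq
            omega
      set μ0 := nsmulG (q - 1) ν0 with hμ0def
      have hμ0 : μ0 ∈ Nset := NmemSmul _ ν0 hν0
      have hμ0co : μ0 k = n k - e k := by
        rw [hμ0def, nsmul_coord _ ν0 k (hν0.1 k).1, hν0co]
        have h1 : (q - 1) * e k = n k - e k := by
          have h2 : (q - 1) * e k + 1 * e k = q * e k := by
            rw [← Nat.add_mul]
            congr 1
            omega
          have h3 : q * e k = n k := by rw [Nat.mul_comm] at hq; exact hq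
          omega
        rw [h1, Nat.mod_eq_of_lt (by omega)]
      set t := ν k / e k with htdef
      have hdm : e k * t + r' = ν k := Nat.div_add_mod _ _
      set μ := addG ν (nsmulG t μ0) with hμdef
      have hμ : μ ∈ Nset := NmemAdd ν hν _ (NmemSmul t μ0 hμ0)
      have hμco : μ k = r' := by
        rw [hμdef]
        show (ν k + (nsmulG t μ0) k) % n k = r'
        rw [nsmul_coord t μ0 k (by rw [hμ0co]; omega), hμ0co, Nat.add_mod_mod]
        have harith : ν k + t * (n k - e k) = r' + t * n k := by
          have h3 : t * (n k - e k) + t * e k = t * n k := by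
            rw [← Nat.mul_add]
            congr 1
            omega
          have hc2 : e k * t = t * e k := Nat.mul_comm _ _
          omega
        rw [harith, Nat.add_mul_mod_self_right, Nat.mod_eq_of_lt (by omega)]
      have := helow k μ hμ (by omega)
      omega
  have heDvdSucc : ∀ k, e k ∣ e (k+1) := by
    intro k
    rcases keyk (k+1) with ⟨ν, hν, hco⟩ | h
    · have h1 : e k ∣ ν k := hNdvdMod k ν hν
      have h2 : ν k = e (k+1) % n k := by rw [← hco]; exact (hν.1 k).2.symm
      rw [h2] at h1
      exact (Nat.dvd_mod_iff (hediv k)).mp h1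
    · rw [h]
      exact dvd_trans (hediv k) (hnd k)
  have heDvdLe : ∀ k m, k ≤ m → e k ∣ e m := dvd_chain e heDvdSucc
  -- D2' and D3
  have D2 : ∀ g ∈ Γ, ∀ g' ∈ Γ, φ g = φ g' → ∀ k, g k % e k = g' k % e k := by
    intro g hg g' hg' heq k
    have hν := dchar1 g hg g' hg' heq
    set ν := addG g (invG g') with hνdef
    have hsum : (ν k + g' k) % n k = g k := by
      have := congrFun (hadd_inv_add g hg g' hg') k
      exact this
    have hdvd : e k ∣ ν k := hNdvdMod k ν hν
    calc g k % e k = (ν k + g' k) % n k % e k := by rw [hsum]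
      _ = (ν k + g' k) % e k := Nat.mod_mod_of_dvd _ (hediv k)
      _ = (ν k % e k + g' k) % e k := (Nat.mod_add_mod _ _ _).symm
      _ = g' k % e k := by
          have h0 : ν k % e k = 0 := by
            rcases hdvd with ⟨c, hc⟩
            rw [hc, Nat.mul_mod_right]
          rw [h0, Nat.zero_add]
  have D3 : ∀ g ∈ Γ, ∀ g' ∈ Γ, (∀ k, g k % e k = g' k % e k) → φ g = φ g' := by
    intro g hg g' hg' hcong
    set ν := addG g (invG g') with hνdef
    have hνΓ : ν ∈ Γ := addG_mem _ _ hg (invG_mem _ hg')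
    have hdvd : ∀ k, e k ∣ ν k := by
      intro k
      have hsum : (ν k + g' k) % n k = g k := congrFun (hadd_inv_add g hg g' hg') k
      have h1 : (ν k + g' k) % e k = g' k % e k := by
        calc (ν k + g' k) % e k = (ν k + g' k) % n k % e k :=
            (Nat.mod_mod_of_dvd _ (hediv k)).symm
          _ = g k % e k := by rw [hsum]
          _ = g' k % e k := hcong k
      have h2 : ν k + g' k ≡ 0 + g' k [MOD e k] := by
        rw [Nat.ModEq, h1, Nat.zero_add]
      have h3 : ν k ≡ 0 [MOD e k] := Nat.ModEq.add_right_cancel' _ h2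
      exact (Nat.modEq_zero_iff_dvd).mp h3
    have hνz : φ ν = z := by
      have hbnd : ∀ k, dist (φ ν) z ≤ 2 * κ k := by
        intro k
        obtain ⟨μ, hμ, hμco⟩ := hmul k (ν k) (hνΓ k).1 (hdvd k)
        have := F3 ν hνΓ μ hμ.1 k hμco.symm
        rw [hμ.2] at this
        exact this
      have h2κ : Tendsto (fun k => 2 * κ k) atTop (𝓝 (0:ℝ)) := by
        simpa using hκ.const_mul (2:ℝ)
      have : dist (φ ν) z ≤ 0 := ge_of_tendsto h2κ (Eventually.of_forall hbnd)
      exact eq_of_dist_eq_zero (le_antisymm this dist_nonneg)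
    exact dchar2 g hg g' hg' ⟨hνΓ, hνz⟩
  -- topology of Γ
  have hΓclosed : IsClosed Γ := by
    have : Γ = ⋂ k, {g : ℕ → ℕ | g k < n k ∧ g (k+1) % n k = g k} := by
      ext g
      simp [hΓ, Set.mem_iInter]
    rw [this]
    apply isClosed_iInter
    intro k
    have hcont : Continuous (fun g : ℕ → ℕ => (g k, g (k+1))) :=
      (continuous_apply k).prodMk (continuous_apply (k+1))
    have : {g : ℕ → ℕ | g k < n k ∧ g (k+1) % n k = g k} =
        (fun g : ℕ → ℕ => (g k, g (k+1))) ⁻¹' {q : ℕ × ℕ | q.1 < n k ∧ q.2 % n k = q.1} := by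
      rfl
    rw [this]
    exact (isClosed_discrete _).preimage hcont
  have hΓcompact : IsCompact Γ := by
    have hbox : IsCompact (Set.pi Set.univ (fun k => Set.Iic (n k))) :=
      isCompact_univ_pi (fun k => (Set.finite_Iic (n k)).isCompact)
    apply IsCompact.of_isClosed_subset hbox hΓclosed
    intro g hg
    rw [Set.mem_pi]
    intro k _
    exact le_of_lt (hg k).1
  have hφcont : ContinuousOn φ Γ := by
    intro g hg
    rw [ContinuousWithinAt, Metric.tendsto_nhds]
    intro η hη
    obtain ⟨K, hK⟩ := (hκ.eventually (gt_mem_nhds (by linarith : (0:ℝ) < η/2))).exists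
    have hU : {h : ℕ → ℕ | h K = g K} ∈ 𝓝 g := by
      have hop : IsOpen {h : ℕ → ℕ | h K = g K} := by
        have : {h : ℕ → ℕ | h K = g K} = (fun h : ℕ → ℕ => h K) ⁻¹' {g K} := rfl
        rw [this]
        exact (isOpen_discrete _).preimage (continuous_apply K)
      exact hop.mem_nhds rfl
    filter_upwards [mem_nhdsWithin_of_mem_nhds hU, self_mem_nhdsWithin] with g' hg'U hg'Γ
    calc dist (φ g') (φ g) ≤ 2 * κ K := F3 g' hg'Γ g hg K hg'U
      _ < η := by linarith
  set K : Set X := φ '' Γ with hK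
  have hKcpt : IsCompact K := hΓcompact.image_of_continuousOn hφcont
  have hKclosed : IsClosed K := hKcpt.isClosed
  -- z is in its own omega limit set
  have hzω : z ∈ omegaLimitPt f z := by
    apply mem_omega_of_freq
    intro M δ hδ
    have h1 : ∀ᶠ k in atTop, κ k < δ := hκ.eventually (gt_mem_nhds hδ)
    have h2 : ∀ᶠ k in atTop, M ≤ n k := by
      filter_upwards [eventually_ge_atTop M] with k hk
      exact le_trans hk hnm.le_apply
    obtain ⟨k, hk1, hk2⟩ := (h1.and h2).exists
    refine ⟨n k, hk2, ?_⟩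
    have := hR k (n k) 0 (by rw [Nat.mod_self, Nat.zero_mod])
    simp only [Function.iterate_zero, id_eq] at this
    calc dist (f^[n k] z) z ≤ κ k := this
      _ < δ := hk1
  have horbφ : ∀ c, f^[c] z ∈ K := by
    intro c
    rw [← Fc c]
    exact ⟨natG c, natG_mem c, rfl⟩
  have hZeq : omegaLimitPt f z = K := by
    apply subset_antisymm
    · rw [omega_eq_closure_orbit hf hzω]
      apply closure_minimal ?_ hKclosed
      rintro p ⟨c, rfl⟩
      exact horbφ c
    · rintro p ⟨g, hg, rfl⟩
      rw [omega_eq_closure_orbit hf hzω]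
      apply mem_closure_of_tendsto (hφ g hg)
      exact Eventually.of_forall (fun k => ⟨g k, rfl⟩)
  -- dichotomy on e
  have hemono : Monotone e :=
    monotone_nat_of_le_succ (fun k => Nat.le_of_dvd (hepos (k+1)) (heDvdSucc k))
  by_cases hbdd : ∃ C, ∀ k, e k ≤ C
  · -- periodic case
    left
    obtain ⟨C, hC⟩ := hbdd
    have hbdd2 : BddAbove (Set.range e) := ⟨C, by rintro _ ⟨k, rfl⟩; exact hC k⟩
    have hM : sSup (Set.range e) ∈ Set.range e :=
      Nat.sSup_mem ⟨e 0, ⟨0, rfl⟩⟩ hbdd2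
    obtain ⟨Kp, hKp⟩ := hM
    have hconst : ∀ m, Kp ≤ m → e m = e Kp := by
      intro m hm
      apply le_antisymm
      · rw [hKp]
        exact le_csSup hbdd2 ⟨m, rfl⟩
      · exact hemono hm
    set P := e Kp with hPdef
    have hPpos : 0 < P := hepos Kp
    have hper : f^[P] z = z := by
      have h1 : φ (natG P) = φ (natG 0) := by
        apply D3 _ (natG_mem P) _ (natG_mem 0)
        intro k
        have hPd : e k ∣ P := by
          rcases le_or_gt k Kp with h | h
          · exact heDvdLe k Kp h
          · rw [hconst k (le_of_lt h)]
        show P % n k % e k = 0 % n k % e k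
        rw [Nat.zero_mod, Nat.zero_mod]
        have : e k ∣ P % n k := (Nat.dvd_mod_iff (hediv k)).mpr hPd
        rcases this with ⟨c, hc⟩
        rw [hc, Nat.mul_mod_right]
      rw [Fc P, Fc 0] at h1
      simpa using h1
    have horbit : ∀ c, f^[c] z = f^[c % P] z := by
      intro c
      induction c using Nat.strong_induction_on with
      | _ c ih =>
        by_cases h : c < P
        · rw [Nat.mod_eq_of_lt h]
        · have hc : c = (c - P) + P := by omega
          rw [hc, Nat.add_mod_right, Function.iterate_add_apply, hper, ih (c - P) (by omega)]
    refine ⟨z, hzω, P, hPpos, hper, ?_⟩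
    have hfin : Set.Finite {p : X | ∃ j < P, f^[j] z = p} := by
      have : {p : X | ∃ j < P, f^[j] z = p} = (fun j => f^[j] z) '' {j | j < P} := by
        ext p
        simp [Set.mem_image]
      rw [this]
      exact Set.Finite.image _ (Set.finite_Iio P)
    apply subset_antisymm
    · rw [omega_eq_closure_orbit hf hzω]
      apply closure_minimal ?_ hfin.isClosed
      rintro p ⟨c, rfl⟩
      exact ⟨c % P, Nat.mod_lt _ hPpos, (horbit c).symm⟩
    · rintro p ⟨j, hj, rfl⟩
      exact iterate_mem_omega hf hzω j
  · -- odometer case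
    right
    push_neg at hbdd
    have hetop : Tendsto e atTop atTop := by
      apply tendsto_atTop_atTop_of_monotone hemono
      intro b
      obtain ⟨k, hk⟩ := hbdd b
      exact ⟨k, le_of_lt hk⟩
    set ps : PeriodicStructure := ⟨e, hepos, heDvdSucc, hetop⟩ with hps
    rw [hZeq]
    have hsel : ∀ q : ↥K, ∃ g, g ∈ Γ ∧ φ g = ↑q := by
      intro q
      obtain ⟨g, hg, hgq⟩ := q.2
      exact ⟨g, hg, hgq⟩
    choose gsel hgsel1 hgsel2 using hsel
    have hcohsel : ∀ q : ↥K, ∀ k, ((gsel q (k+1)) % e (k+1)) % e k = gsel q k % e k := by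
      intro q k
      rw [Nat.mod_mod_of_dvd _ (heDvdSucc k)]
      conv_rhs => rw [← (hgsel1 q k).2]
      rw [Nat.mod_mod_of_dvd _ (hediv k)]
    set χ : ↥K → ps.space :=
      fun q => ⟨fun k => gsel q k % e k, fun k => ⟨Nat.mod_lt _ (hepos k), hcohsel q k⟩⟩ with hχ
    have hχval : ∀ (q : ↥K) (g : ℕ → ℕ), g ∈ Γ → φ g = ↑q → ∀ k,
        (χ q).1 k = g k % e k := by
      intro q g hg hgq k
      show gsel q k % e k = g k % e k
      exact D2 _ (hgsel1 q) _ hg (by rw [hgsel2 q, hgq]) k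
    have hχinj : Function.Injective χ := by
      intro q q' hqq
      have h1 : ∀ k, gsel q k % e k = gsel q' k % e k := by
        intro k
        exact congrFun (congrArg Subtype.val hqq) k
      have h2 := D3 _ (hgsel1 q) _ (hgsel1 q') h1
      rw [hgsel2 q, hgsel2 q'] at h2
      exact Subtype.ext h2
    have hχsurj : Function.Surjective χ := by
      intro w
      have humem : ∀ m : ℕ, natG (w.1 m) ∈ Γ := fun m => natG_mem _
      have hFle : Filter.map (fun m => natG (w.1 m)) atTop ≤ Filter.principal Γ := by
        rw [Filter.le_principal_iff, Filter.mem_map]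
        exact Filter.Eventually.of_forall humem
      obtain ⟨γ, hγΓ, hclus⟩ := hΓcompact.exists_clusterPt hFle
      have hfreq : ∀ k, ∃ m, k ≤ m ∧ natG (w.1 m) k = γ k := by
        intro k
        have hU : {h : ℕ → ℕ | h k = γ k} ∈ 𝓝 γ := by
          have hop : IsOpen {h : ℕ → ℕ | h k = γ k} := by
            have hpre : {h : ℕ → ℕ | h k = γ k} = (fun h : ℕ → ℕ => h k) ⁻¹' {γ k} := rfl
            rw [hpre]
            exact (isOpen_discrete _).preimage (continuous_apply k)
          exact hop.mem_nhds rfl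
        have hmc : MapClusterPt γ atTop (fun m => natG (w.1 m)) := hclus
        have hfr := (mapClusterPt_iff_frequently.mp hmc) _ hU
        obtain ⟨m, hm, hval⟩ := (Filter.frequently_atTop.mp hfr) k
        exact ⟨m, hm, hval⟩
      have hγcong : ∀ k, γ k % e k = w.1 k := by
        intro k
        obtain ⟨m, hkm, hval⟩ := hfreq k
        have h1 : γ k = w.1 m % n k := hval.symm
        have h2 : w.1 m % e k = w.1 k :=
          desc_coh e heDvdSucc w.1 (fun j => (w.2 j).2) k m hkm
        rw [h1, Nat.mod_mod_of_dvd _ (hediv k), h2]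
      refine ⟨⟨φ γ, ⟨γ, hγΓ, rfl⟩⟩, ?_⟩
      apply Subtype.ext
      funext k
      have hv := hχval ⟨φ γ, ⟨γ, hγΓ, rfl⟩⟩ γ hγΓ rfl k
      rw [hv]
      exact hγcong k
    have hχcont : Continuous χ := by
      apply Continuous.subtype_mk
      apply continuous_pi
      intro k
      rw [continuous_discrete_rng]
      intro r
      have hfib : ∀ r' : ℕ, IsClosed {q : ↥K | gsel q k % e k = r'} := by
        intro r'
        have hseteq : {q : ↥K | gsel q k % e k = r'} =
            Subtype.val ⁻¹' (φ '' (Γ ∩ {g : ℕ → ℕ | g k % e k = r'})) := by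
          ext q
          constructor
          · intro hq
            exact ⟨gsel q, ⟨hgsel1 q, hq⟩, hgsel2 q⟩
          · rintro ⟨g, ⟨hgΓ, hgr⟩, hgq⟩
            show gsel q k % e k = r'
            rw [← hgr]
            exact D2 _ (hgsel1 q) _ hgΓ (by rw [hgsel2 q, hgq]) k
        rw [hseteq]
        apply IsClosed.preimage continuous_subtype_val
        apply IsCompact.isClosed
        apply IsCompact.image_of_continuousOn
        · apply hΓcompact.inter_right
          have hseteq2 : {g : ℕ → ℕ | g k % e k = r'} =
              (fun g : ℕ → ℕ => g k) ⁻¹' {m | m % e k = r'} := rfl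
          rw [hseteq2]
          exact (isClosed_discrete _).preimage (continuous_apply k)
        · exact hφcont.mono Set.inter_subset_left
      have hopen : IsOpen {q : ↥K | gsel q k % e k = r} := by
        rw [← isClosed_compl_iff]
        have hcompl : {q : ↥K | gsel q k % e k = r}ᶜ =
            ⋃ r' ∈ (Finset.range (e k)).filter (· ≠ r), {q : ↥K | gsel q k % e k = r'} := by
          ext q
          simp only [Set.mem_compl_iff, Set.mem_setOf_eq, Set.mem_iUnion, Finset.mem_filter,
            Finset.mem_range, Finset.mem_coe]
          constructor
          · intro hq
            exact ⟨gsel q k % e k, ⟨⟨Nat.mod_lt _ (hepos k), hq⟩, rfl⟩⟩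
          · rintro ⟨r', ⟨⟨hlt, hne⟩, hval⟩⟩
            rw [hval]
            exact hne
        rw [hcompl]
        apply Set.Finite.isClosed_biUnion (Finset.finite_toSet _)
        intro r' _
        exact hfib r'
      exact hopen
    haveI : CompactSpace ↥K := isCompact_iff_compactSpace.mp hKcpt
    haveI : T2Space ps.space :=
      inferInstanceAs (T2Space {x : ℕ → ℕ // ∀ j, x j < ps.m j ∧ x (j+1) % ps.m j = x j})
    set eqv : ↥K ≃ ps.space := Equiv.ofBijective χ ⟨hχinj, hχsurj⟩ with heqv
    have heqvcont : Continuous eqv := hχcont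
    set homeo : ↥K ≃ₜ ps.space := heqvcont.homeoOfEquivCompactToT2 with hhomeo
    refine ⟨ps, homeo.symm, ?_⟩
    intro w
    set q : ↥K := homeo.symm w with hqdef
    have hχq : χ q = w := homeo.apply_symm_apply w
    obtain ⟨γ, hγΓ, hγq⟩ := q.2
    have hfq : f ↑q = φ (addG γ (natG 1)) := by
      rw [← hγq, F2 γ hγΓ 1]
      simp
    have hfqK : f ↑q ∈ K := by
      rw [hfq]
      exact ⟨_, addG_mem _ _ hγΓ (natG_mem 1), rfl⟩
    have hχq' : χ (⟨f ↑q, hfqK⟩ : ↥K) = ps.step w := by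
      apply Subtype.ext
      funext k
      have h1 : (χ (⟨f ↑q, hfqK⟩ : ↥K)).1 k = (addG γ (natG 1)) k % e k :=
        hχval _ _ (addG_mem _ _ hγΓ (natG_mem 1)) hfq.symm k
      have h2 : (addG γ (natG 1)) k % e k = (γ k + 1) % e k := by
        show (γ k + 1 % n k) % n k % e k = (γ k + 1) % e k
        rw [Nat.mod_mod_of_dvd _ (hediv k)]
        have h3 : (1 % n k) ≡ 1 [MOD e k] :=
          Nat.ModEq.of_dvd (hediv k) (Nat.mod_modEq 1 (n k))
        exact Nat.ModEq.add_left (γ k) h3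
      have h4 : (ps.step w).1 k = (w.1 k + 1) % e k := rfl
      have h5 : w.1 k = γ k % e k := by
        rw [← hχq]
        exact hχval q γ hγΓ hγq k
      rw [h1, h2, h4, h5, Nat.mod_add_mod]
    have hstep : homeo.symm (ps.step w) = ⟨f ↑q, hfqK⟩ := by
      apply hχinj
      have ha : χ (homeo.symm (ps.step w)) = ps.step w := homeo.apply_symm_apply _
      rw [ha, hχq']
    show f ↑(homeo.symm w) = ↑(homeo.symm (ps.step w))
    rw [hstep]

end D


theorem dense_A_of_shadowing {X : Type*} [MetricSpace X] [CompactSpace X]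
    (f : X → X) (hf : Continuous f) (hsh : ShadowingProperty f) :
    Dense {x : X |
      IsPeriodicOrbit f (omegaLimitPt f x) ∨ IsOdometer f (omegaLimitPt f x)} := by
  rw [Metric.dense_iff]
  intro x r hr
  obtain ⟨y, z, n, κ, B, hxy, hn1, hnd, hnm, hκpos, hκ0, hR, hB, hT⟩ :=
    construction hf hsh x (half_pos hr)
  refine ⟨y, ?_, ?_⟩
  · rw [Metric.mem_ball, dist_comm]
    calc dist x y ≤ r/2 := hxy
      _ < r := by linarith
  · show IsPeriodicOrbit f (omegaLimitPt f y) ∨ IsOdometer f (omegaLimitPt f y)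
    have hdist0 : Tendsto (fun i => dist (f^[i] y) (f^[i] z)) atTop (𝓝 0) := by
      rw [Metric.tendsto_atTop]
      intro η hη
      obtain ⟨k, hk⟩ := (hκ0.eventually (gt_mem_nhds hη)).exists
      refine ⟨B k, fun i hi => ?_⟩
      rw [Real.dist_eq, sub_zero, abs_of_nonneg dist_nonneg]
      exact lt_of_le_of_lt (hT k i hi) hk
    have hωeq : omegaLimitPt f y = omegaLimitPt f z := omegaLimitSeq_congr hdist0
    rw [hωeq]
    exact periodic_or_odometer hf z n κ hn1 hnd hnm hκ0 hR
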